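/- Let H be a Tonelli Hamiltonian on ℝⁿ × ℝⁿ with associated Tonelli Lagrangian L, ℤⁿ-periodic in x. For λ > 0 define ū_λ(x) = inf { ∫_{−∞}^0 e^{λs} L(σ(s), σ̇(s)) ds : σ : (−∞,0] → ℝⁿ piecewise C¹ with σ(0) = x }. Then: (1) ū_λ(x) is finite for every x ∈ ℝⁿ and ū_λ is ℤⁿ-periodic; (2) there exists a constant K > 0 depending only on L (not on λ) such that for every λ > 0, |ū_λ(x) − ū_λ(y)| ≤ K|x − y| for all x, y ∈ ℝⁿ; (3) ū_λ is λ-dominated by L. -/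

import Mathlib

open Set Filter MeasureTheory Real Topology

noncomputable section

abbrev E (n : ℕ) : Type := EuclideanSpace ℝ (Fin n)

noncomputable def Hp {n : ℕ} (H : E n × E n → ℝ) (x p : E n) : E n :=
  gradient (fun q => H (x, q)) p

noncomputable def Hx {n : ℕ} (H : E n × E n → ℝ) (x p : E n) : E n :=
  gradient (fun y => H (y, p)) x

noncomputable def Lv {n : ℕ} (L : E n × E n → ℝ) (x v : E n) : E n :=
  gradient (fun w => L (x, w)) v

noncomputable def Lx {n : ℕ} (L : E n × E n → ℝ) (x v : E n) : E n :=
  gradient (fun y => L (y, v)) x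

/-- A Tonelli Hamiltonian. -/
def Tonelli {n : ℕ} (H : E n × E n → ℝ) : Prop :=
  ContDiff ℝ 2 H ∧
  (∀ x p v : E n, v ≠ 0 → 0 < (inner ℝ (fderiv ℝ (fun q => Hp H x q) p v) v : ℝ)) ∧
  (∀ A : ℝ, ∃ B : ℝ, 0 ≤ B ∧ ∀ x p : E n, A * ‖p‖ - B ≤ H (x, p))

/-- `L` is the Lagrangian associated to `H` by fiberwise Legendre-Fenchel transform. -/
def IsLagrangianOf {n : ℕ} (L H : E n × E n → ℝ) : Prop :=
  ∀ x v : E n, IsLUB {r : ℝ | ∃ p : E n, r = (inner ℝ p v : ℝ) - H (x, p)} (L (x, v))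

/-- A continuous piecewise `C¹` curve on `[a,b]`, with derivative `γ'`. -/
def PiecewiseC1 {n : ℕ} (a b : ℝ) (γ γ' : ℝ → E n) : Prop :=
  ContinuousOn γ (Set.Icc a b) ∧
  ∃ s : Finset ℝ,
    (∀ t ∈ Set.Icc a b, t ∉ s → HasDerivAt γ (γ' t) t) ∧
    ContinuousOn γ' (Set.Icc a b \ s) ∧
    ∃ C : ℝ, ∀ t ∈ Set.Icc a b, ‖γ' t‖ ≤ C

/-- `u` is λ-dominated by `L`. -/
def Dominated {n : ℕ} (lam : ℝ) (L : E n × E n → ℝ) (u : E n → ℝ) : Prop :=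
  ∀ a b : ℝ, a < b → ∀ γ γ' : ℝ → E n, PiecewiseC1 a b γ γ' →
    Real.exp (lam * b) * u (γ b) - Real.exp (lam * a) * u (γ a) ≤
      ∫ t in a..b, Real.exp (lam * t) * L (γ t, γ' t)

/-- `γ` is `(u,L)`-λ-calibrated on `[a,b]`. -/
def Calibrated {n : ℕ} (lam : ℝ) (L : E n × E n → ℝ) (u : E n → ℝ)
    (a b : ℝ) (γ γ' : ℝ → E n) : Prop :=
  Real.exp (lam * b) * u (γ b) - Real.exp (lam * a) * u (γ a) =
    ∫ t in a..b, Real.exp (lam * t) * L (γ t, γ' t)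

def intVec {n : ℕ} (k : Fin n → ℤ) : E n :=
  (EuclideanSpace.equiv (Fin n) ℝ).symm (fun i => (k i : ℝ))


theorem L_meas {n : ℕ} {H L : E n × E n → ℝ} (hHc : Continuous H)
    (hLH : IsLagrangianOf L H) : Measurable L := by
  apply LowerSemicontinuous.measurable
  rw [lowerSemicontinuous_iff_isOpen_preimage]
  intro a
  have h : L ⁻¹' Set.Ioi a = ⋃ p : E n, {q : E n × E n | a < (inner ℝ p q.2 : ℝ) - H (q.1, p)} := by
    ext ⟨x, v⟩
    simp only [Set.mem_preimage, Set.mem_Ioi, Set.mem_iUnion, Set.mem_setOf_eq]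
    rw [lt_isLUB_iff (hLH x v)]
    constructor
    · rintro ⟨r, ⟨p, rfl⟩, hr⟩; exact ⟨p, hr⟩
    · rintro ⟨p, hp⟩; exact ⟨_, ⟨p, rfl⟩, hp⟩
  rw [h]
  refine isOpen_iUnion fun p => isOpen_lt continuous_const ?_
  exact (Continuous.inner continuous_const continuous_snd).sub
    (hHc.comp (continuous_fst.prodMk continuous_const))

theorem L_lb0 {n : ℕ} {H L : E n × E n → ℝ} (hLH : IsLagrangianOf L H) (x v : E n) :
    -H (x, 0) ≤ L (x, v) :=
  (hLH x v).1 ⟨0, by simp⟩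

theorem L_ub {n : ℕ} {H L : E n × E n → ℝ} (hH : Tonelli H) (hLH : IsLagrangianOf L H)
    (A : ℝ) (hA : 0 ≤ A) : ∃ B : ℝ, 0 ≤ B ∧ ∀ x v : E n, ‖v‖ ≤ A → L (x, v) ≤ B := by
  obtain ⟨B, hB0, hB⟩ := hH.2.2 (A + 1)
  refine ⟨B, hB0, fun x v hv => ?_⟩
  apply (hLH x v).2
  rintro r ⟨p, rfl⟩
  have h1 : (inner ℝ p v : ℝ) ≤ ‖p‖ * A :=
    le_trans (real_inner_le_norm p v) (by nlinarith [norm_nonneg p, norm_nonneg v])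
  have h2 := hB x p
  nlinarith [norm_nonneg p]

theorem H0_bdd {n : ℕ} {H : E n × E n → ℝ} (hHc : Continuous H)
    (hper : ∀ (k : Fin n → ℤ) (x pp : E n), H (x + intVec k, pp) = H (x, pp)) :
    ∃ M : ℝ, ∀ x : E n, H (x, 0) ≤ M := by
  have hcomp : IsCompact (Metric.closedBall (0 : E n) n) := isCompact_closedBall _ _
  obtain ⟨M, hM⟩ := (hcomp.image (hHc.comp (Continuous.prodMk continuous_id continuous_const))).bddAbove
  refine ⟨M, fun x => ?_⟩
  set k : Fin n → ℤ := fun i => ⌊x i⌋ with hk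
  have hxy : (x - intVec k) + intVec k = x := sub_add_cancel x _
  have hy : x - intVec k ∈ Metric.closedBall (0 : E n) n := by
    rw [Metric.mem_closedBall, dist_zero_right]
    have hcoord : ∀ i, ‖(x - intVec k) i‖ ≤ 1 := by
      intro i
      have : (x - intVec k) i = Int.fract (x i) := rfl
      rw [this, Real.norm_eq_abs, abs_of_nonneg (Int.fract_nonneg _)]
      exact (Int.fract_lt_one _).le
    have hsum : ∑ i, ‖(x - intVec k) i‖^2 ≤ (n:ℝ) := by
      calc ∑ i, ‖(x - intVec k) i‖^2 ≤ ∑ _i : Fin n, (1:ℝ) :=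
            Finset.sum_le_sum (fun i _ => by nlinarith [hcoord i, norm_nonneg ((x - intVec k) i)])
        _ = n := by simp
    rw [EuclideanSpace.norm_eq]
    calc Real.sqrt (∑ i, ‖(x - intVec k) i‖^2) ≤ Real.sqrt n := Real.sqrt_le_sqrt hsum
      _ ≤ n := by
          rw [show ((n:ℝ)) = Real.sqrt ((n:ℝ)^2) from (Real.sqrt_sq (Nat.cast_nonneg n)).symm]
          apply Real.sqrt_le_sqrt
          rw [Real.sqrt_sq (Nat.cast_nonneg n)]
          exact_mod_cast Nat.le_self_pow (by norm_num) n
  have : H (x, 0) = H (x - intVec k, 0) := by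
    conv_lhs => rw [← hxy]
    rw [hper]
  rw [this]
  exact hM ⟨_, hy, rfl⟩

theorem L_lb {n : ℕ} {H L : E n × E n → ℝ} (hHc : Continuous H) (hLH : IsLagrangianOf L H)
    (hper : ∀ (k : Fin n → ℤ) (x pp : E n), H (x + intVec k, pp) = H (x, pp)) :
    ∃ c0 : ℝ, 0 ≤ c0 ∧ ∀ x v : E n, -c0 ≤ L (x, v) := by
  obtain ⟨M, hM⟩ := H0_bdd hHc hper
  refine ⟨max M 0, le_max_right _ _, fun x v => ?_⟩
  have := L_lb0 hLH x v
  have := hM x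
  have : -(max M 0) ≤ -H (x,0) := by
    simp only [neg_le_neg_iff]
    exact le_max_of_le_left (hM x)
  linarith [L_lb0 hLH x v]

theorem PiecewiseC1.mono_left {n : ℕ} {a b a2 : ℝ} {γ γ' : ℝ → E n}
    (h : PiecewiseC1 a b γ γ') (h1 : a ≤ a2) : PiecewiseC1 a2 b γ γ' := by
  obtain ⟨hc, s, hd, hc', C, hC⟩ := h
  have hsub : Set.Icc a2 b ⊆ Set.Icc a b := Set.Icc_subset_Icc h1 le_rfl
  exact ⟨hc.mono hsub, s, fun t ht hts => hd t (hsub ht) hts,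
    hc'.mono (Set.diff_subset_diff_left hsub), C, fun t ht => hC t (hsub ht)⟩

theorem intInt_exp {lam : ℝ} (h : lam ≠ 0) (a b : ℝ) :
    ∫ t in a..b, Real.exp (lam * t) = (Real.exp (lam * b) - Real.exp (lam * a)) / lam := by
  rw [intervalIntegral.integral_comp_mul_left (f := fun u => Real.exp u) h, integral_exp,
    smul_eq_mul, inv_mul_eq_div]

theorem exp_intOn {lam : ℝ} (hlam : 0 < lam) :
    IntegrableOn (fun s : ℝ => Real.exp (lam * s)) (Set.Iic (0:ℝ)) := by
  have hcont : Continuous fun s : ℝ => Real.exp (lam * s) :=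
    Real.continuous_exp.comp (continuous_const.mul continuous_id)
  refine integrableOn_Iic_of_intervalIntegral_norm_bounded (μ := volume) (l := atBot)
      (a := fun y : ℝ => y) (1 / lam) 0 (fun _ => hcont.integrableOn_Ioc) tendsto_id ?_
  filter_upwards with y
  have h0 : (∫ t in y..0, ‖Real.exp (lam * t)‖) = ∫ t in y..0, Real.exp (lam * t) := by
    congr 1
    funext t
    exact Real.norm_of_nonneg (Real.exp_pos _).le
  rw [h0, intInt_exp hlam.ne', mul_zero, Real.exp_zero]
  have h1 : 1 - Real.exp (lam * y) ≤ 1 := by linarith [Real.exp_pos (lam * y)]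
  exact by gcongr

theorem exp_integral_Iic {lam : ℝ} (hlam : 0 < lam) :
    ∫ s in Set.Iic (0:ℝ), Real.exp (lam * s) = 1 / lam := by
  refine tendsto_nhds_unique
    (intervalIntegral_tendsto_integral_Iic (0:ℝ) (exp_intOn hlam) tendsto_id) ?_
  have heq : ∀ y : ℝ, (∫ t in y..0, Real.exp (lam * t)) = (1 - Real.exp (lam * y)) / lam := by
    intro y; rw [intInt_exp hlam.ne', mul_zero, Real.exp_zero]
  simp only [id_eq, heq]
  have h2 : Tendsto (fun y : ℝ => Real.exp (lam * y)) atBot (𝓝 0) :=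
    Real.tendsto_exp_atBot.comp (Tendsto.const_mul_atBot hlam tendsto_id)
  simpa using ((tendsto_const_nhds (x := (1:ℝ))).sub h2).div_const lam

theorem PiecewiseC1.shift {n : ℕ} {a b : ℝ} {γ γ' : ℝ → E n} (h : PiecewiseC1 a b γ γ')
    (d : ℝ) : PiecewiseC1 (a - d) (b - d) (fun s => γ (s + d)) (fun s => γ' (s + d)) := by
  obtain ⟨hc, s, hd, hc', C, hC⟩ := h
  have hmaps : Set.MapsTo (fun u : ℝ => u + d) (Set.Icc (a - d) (b - d)) (Set.Icc a b) := by
    rintro u ⟨h1, h2⟩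
    exact ⟨by simp only []; linarith, by simp only []; linarith⟩
  have hcontad : Continuous (fun u : ℝ => u + d) := continuous_id.add continuous_const
  refine ⟨hc.comp hcontad.continuousOn hmaps, s.image (· - d), ?_, ?_, C, ?_⟩
  · intro t ht hts
    have h1 : t + d ∉ s := fun hmem => hts (Finset.mem_image.mpr ⟨t + d, hmem, by ring⟩)
    exact HasDerivAt.comp_add_const t d (hd (t + d) (hmaps ht) h1)
  · apply hc'.comp hcontad.continuousOn
    rintro u ⟨huI, huS⟩
    refine ⟨hmaps huI, fun hmem => huS ?_⟩
    exact Finset.mem_coe.mpr (Finset.mem_image.mpr ⟨u + d, hmem, by ring⟩)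
  · intro t ht; exact hC (t + d) (hmaps ht)

theorem integrand_aesm {n : ℕ} {L : E n × E n → ℝ} (hLm : Measurable L)
    {a b : ℝ} {γ γ' : ℝ → E n} (h : PiecewiseC1 a b γ γ') (lam : ℝ) :
    AEStronglyMeasurable (fun t => Real.exp (lam * t) * L (γ t, γ' t))
      (volume.restrict (Set.Ioc a b)) := by
  obtain ⟨hc, s, _, hc', _, _⟩ := h
  have hsm : MeasurableSet (Set.Icc a b \ (s : Set ℝ)) :=
    measurableSet_Icc.diff s.finite_toSet.measurableSet
  have hγm : AEMeasurable γ (volume.restrict (Set.Icc a b \ (s : Set ℝ))) :=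
    (hc.mono Set.diff_subset).aemeasurable hsm
  have hγ'm : AEMeasurable γ' (volume.restrict (Set.Icc a b \ (s : Set ℝ))) :=
    hc'.aemeasurable hsm
  have hL : AEMeasurable (fun t => L (γ t, γ' t))
      (volume.restrict (Set.Icc a b \ (s : Set ℝ))) :=
    hLm.comp_aemeasurable (hγm.prodMk hγ'm)
  have hmono : volume.restrict (Set.Ioc a b \ (s : Set ℝ))
      ≤ volume.restrict (Set.Icc a b \ (s : Set ℝ)) :=
    Measure.restrict_mono (Set.diff_subset_diff_left Set.Ioc_subset_Icc_self) le_rfl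
  have h1 : AEMeasurable (fun t => L (γ t, γ' t))
      (volume.restrict (Set.Ioc a b \ (s : Set ℝ))) := hL.mono_measure hmono
  have hset : (Set.Ioc a b \ (s : Set ℝ) : Set ℝ) =ᵐ[volume] Set.Ioc a b := by
    refine MeasureTheory.diff_ae_eq_self.mpr ?_
    exact measure_mono_null Set.inter_subset_right (s.finite_toSet.measure_zero _)
  have h2 : AEMeasurable (fun t => L (γ t, γ' t)) (volume.restrict (Set.Ioc a b)) := by
    rwa [Measure.restrict_congr_set hset] at h1
  exact ((Real.measurable_exp.comp
    (measurable_const.mul measurable_id)).aemeasurable.mul h2).aestronglyMeasurable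

theorem integrand_intOn {n : ℕ} {L : E n × E n → ℝ} (hLm : Measurable L)
    {a b : ℝ} {γ γ' : ℝ → E n} (h : PiecewiseC1 a b γ γ')
    {lam : ℝ} (hlam : 0 < lam) {M : ℝ}
    (hM : ∀ t ∈ Set.Icc a b, |L (γ t, γ' t)| ≤ M) :
    IntegrableOn (fun t => Real.exp (lam * t) * L (γ t, γ' t)) (Set.Ioc a b) := by
  refine Integrable.mono' (g := fun _ => Real.exp (lam * b) * M)
    ((integrableOn_const_iff).mpr (Or.inr measure_Ioc_lt_top)) (integrand_aesm hLm h lam) ?_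
  filter_upwards [ae_restrict_mem measurableSet_Ioc] with t ht
  rw [norm_mul, Real.norm_eq_abs, Real.abs_exp, Real.norm_eq_abs]
  have h1 : Real.exp (lam * t) ≤ Real.exp (lam * b) :=
    Real.exp_le_exp.mpr (mul_le_mul_of_nonneg_left ht.2 hlam.le)
  exact mul_le_mul h1 (hM t (Set.Ioc_subset_Icc_self ht)) (abs_nonneg _) (Real.exp_pos _).le


/-- The set of (finite) discounted actions of piecewise `C¹` curves
`σ : (-∞,0] → ℝⁿ` ending at `x`. -/
def valSet {n : ℕ} (lam : ℝ) (L : E n × E n → ℝ) (x : E n) : Set ℝ :=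
  { r | ∃ σ σ' : ℝ → E n, (∀ a < (0:ℝ), PiecewiseC1 a 0 σ σ') ∧ σ 0 = x ∧
      IntegrableOn (fun s => Real.exp (lam * s) * L (σ s, σ' s)) (Set.Iic 0) volume ∧
      r = ∫ s in Set.Iic (0:ℝ), Real.exp (lam * s) * L (σ s, σ' s) }

/-- The value function `ū_λ(x)`, infimum of the discounted action over curves
ending at `x`. -/
noncomputable def ubar {n : ℕ} (lam : ℝ) (L : E n × E n → ℝ) (x : E n) : ℝ :=
  sInf (valSet lam L x)

theorem key_mem {n : ℕ} {L : E n × E n → ℝ} (hLm : Measurable L)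
    {c0 : ℝ} (hlb : ∀ x v : E n, -c0 ≤ L (x, v))
    (hub : ∀ A : ℝ, 0 ≤ A → ∃ B : ℝ, 0 ≤ B ∧ ∀ x v : E n, ‖v‖ ≤ A → L (x, v) ≤ B)
    {lam : ℝ} (hlam : 0 < lam) {a b : ℝ} (hab : a < b) {γ γ' : ℝ → E n}
    (hγ : PiecewiseC1 a b γ γ') {r : ℝ} (hr : r ∈ valSet lam L (γ a)) :
    Real.exp (lam * (a - b)) * r
      + Real.exp (-(lam * b)) * ∫ t in a..b, Real.exp (lam * t) * L (γ t, γ' t)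
      ∈ valSet lam L (γ b) := by
  obtain ⟨σ, σ', hσpc, hσ0, hσint, rfl⟩ := hr
  obtain ⟨hγcont, sγ, hγd, hγc', Cγ, hCγ⟩ := hγ
  have hγfull : PiecewiseC1 a b γ γ' := ⟨hγcont, sγ, hγd, hγc', Cγ, hCγ⟩
  set c : ℝ := b - a with hcdef
  have hc0 : 0 < c := by rw [hcdef]; linarith
  have hab2 : -c + b = a := by rw [hcdef]; ring
  set τ : ℝ → E n := fun s => if s ≤ -c then σ (s + c) else γ (s + b) with hτdef
  set τ' : ℝ → E n := fun s => if s ≤ -c then σ' (s + c) else γ' (s + b) with hτ'def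
  have hjoin : σ 0 = γ (-c + b) := by rw [hab2, hσ0]
  have hτIci : ∀ s : ℝ, -c ≤ s → τ s = γ (s + b) := by
    intro s hs
    rcases eq_or_lt_of_le hs with h | h
    · rw [← h]
      show (if (-c:ℝ) ≤ -c then σ (-c + c) else γ (-c + b)) = γ (-c + b)
      rw [if_pos le_rfl, neg_add_cancel, hjoin]
    · exact if_neg (not_le.mpr h)
  have hpre : (fun s : ℝ => s + c) ⁻¹' (Set.Iic 0) = Set.Iic (-c) := by
    ext s
    simp only [Set.mem_preimage, Set.mem_Iic]
    constructor <;> intro <;> linarith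
  have hemb : MeasurableEmbedding (fun s : ℝ => s + c) :=
    (Homeomorph.addRight c).isClosedEmbedding.measurableEmbedding
  have hmp : MeasurePreserving (fun s : ℝ => s + c) volume volume :=
    measurePreserving_add_right volume c
  -- left piece integrability
  have hIicInt : IntegrableOn (fun s => Real.exp (lam * s) * L (τ s, τ' s)) (Set.Iic (-c)) := by
    have h1 : IntegrableOn ((fun u => Real.exp (lam * u) * L (σ u, σ' u)) ∘ (fun s : ℝ => s + c))
        ((fun s : ℝ => s + c) ⁻¹' (Set.Iic 0)) :=
      (hmp.integrableOn_comp_preimage hemb).mpr hσint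
    rw [hpre] at h1
    have h2 := h1.const_mul (Real.exp (-(lam * c)))
    refine IntegrableOn.congr_fun h2 (fun s hs => ?_) measurableSet_Iic
    have hs' : s ≤ -c := hs
    have hτs : τ s = σ (s + c) := if_pos hs'
    have hτ's : τ' s = σ' (s + c) := if_pos hs'
    rw [hτs, hτ's]
    simp only [Function.comp_apply]
    rw [← mul_assoc, ← Real.exp_add]
    congr 2
    ring
  -- right piece
  have hδ : PiecewiseC1 (-c) 0 (fun s => γ (s + b)) (fun s => γ' (s + b)) := by
    have h1 := hγfull.shift b
    rwa [show a - b = -c by rw [hcdef]; ring, sub_self] at h1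
  obtain ⟨B, hB0, hB⟩ := hub (max Cγ 0) (le_max_right _ _)
  have hM : ∀ t ∈ Set.Icc (-c) (0:ℝ), |L ((fun s => γ (s + b)) t, (fun s => γ' (s + b)) t)|
      ≤ max c0 B := by
    intro t ht
    have htb : t + b ∈ Set.Icc a b := ⟨by linarith [ht.1], by linarith [ht.2]⟩
    rw [abs_le]
    refine ⟨by linarith [hlb (γ (t + b)) (γ' (t + b)), le_max_left c0 B], ?_⟩
    exact le_trans (hB _ _ (le_trans (hCγ _ htb) (le_max_left _ _))) (le_max_right _ _)
  have hIocInt : IntegrableOn (fun s => Real.exp (lam * s) * L (τ s, τ' s)) (Set.Ioc (-c) 0) := by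
    have h1 := integrand_intOn hLm hδ hlam hM
    refine IntegrableOn.congr_fun h1 (fun s hs => ?_) measurableSet_Ioc
    have hτs : τ s = γ (s + b) := if_neg (not_le.mpr hs.1)
    have hτ's : τ' s = γ' (s + b) := if_neg (not_le.mpr hs.1)
    rw [hτs, hτ's]
  have hUnion : IntegrableOn (fun s => Real.exp (lam * s) * L (τ s, τ' s)) (Set.Iic 0) := by
    rw [← Set.Iic_union_Ioc_eq_Iic (neg_nonpos.mpr hc0.le)]
    exact hIicInt.union hIocInt
  -- left piece value
  have hIicVal : (∫ s in Set.Iic (-c), Real.exp (lam * s) * L (τ s, τ' s))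
      = Real.exp (lam * (a - b))
        * ∫ s in Set.Iic (0:ℝ), Real.exp (lam * s) * L (σ s, σ' s) := by
    have h1 : (∫ s in Set.Iic (-c), Real.exp (lam * s) * L (τ s, τ' s))
        = ∫ s in Set.Iic (-c), Real.exp (-(lam * c))
            * ((fun u => Real.exp (lam * u) * L (σ u, σ' u)) (s + c)) := by
      refine setIntegral_congr_fun measurableSet_Iic fun s hs => ?_
      have hs' : s ≤ -c := hs
      have hτs : τ s = σ (s + c) := if_pos hs'
      have hτ's : τ' s = σ' (s + c) := if_pos hs'
      rw [hτs, hτ's]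
      simp only []
      rw [← mul_assoc, ← Real.exp_add]
      congr 2
      ring
    rw [h1, integral_const_mul]
    have h2 := hmp.setIntegral_preimage_emb hemb
      (fun u => Real.exp (lam * u) * L (σ u, σ' u)) (Set.Iic 0)
    rw [hpre] at h2
    rw [h2]
    congr 2
    rw [hcdef]; ring
  -- right piece value
  have hIocVal : (∫ s in Set.Ioc (-c) (0:ℝ), Real.exp (lam * s) * L (τ s, τ' s))
      = Real.exp (-(lam * b)) * ∫ t in a..b, Real.exp (lam * t) * L (γ t, γ' t) := by
    have h1 : (∫ s in Set.Ioc (-c) (0:ℝ), Real.exp (lam * s) * L (τ s, τ' s))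
        = ∫ s in Set.Ioc (-c) (0:ℝ),
            (fun t => Real.exp (-(lam * b)) * (Real.exp (lam * t) * L (γ t, γ' t))) (s + b) := by
      refine setIntegral_congr_fun measurableSet_Ioc fun s hs => ?_
      have hτs : τ s = γ (s + b) := if_neg (not_le.mpr hs.1)
      have hτ's : τ' s = γ' (s + b) := if_neg (not_le.mpr hs.1)
      rw [hτs, hτ's]
      simp only []
      rw [← mul_assoc, ← Real.exp_add]
      congr 2
      ring
    rw [h1, ← intervalIntegral.integral_of_le (by linarith : -c ≤ (0:ℝ)),
      intervalIntegral.integral_comp_add_right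
        (fun t => Real.exp (-(lam * b)) * (Real.exp (lam * t) * L (γ t, γ' t))) b,
      hab2, zero_add, intervalIntegral.integral_const_mul]
  -- assemble membership
  refine ⟨τ, τ', ?_, ?_, hUnion, ?_⟩
  · -- piecewise C1
    intro a' ha'
    set A : ℝ := min a' (-c) - 1 with hAdef
    have hAa' : A ≤ a' := by
      have := min_le_left a' (-c); rw [hAdef]; linarith
    have hAc : A < -c := by
      have := min_le_right a' (-c); rw [hAdef]; linarith
    refine PiecewiseC1.mono_left ?_ hAa'
    have hAc0 : A + c < 0 := by linarith
    obtain ⟨hσc, s₀, hσd, hσc', C₀, hC₀⟩ := hσpc (A + c) hAc0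
    set S : Finset ℝ := (s₀.image (· - c) ∪ sγ.image (· - b)) ∪ {-c} with hSdef
    have hmem0 : ∀ t : ℝ, t ∉ S → t + c ∉ s₀ := by
      intro t htS hmem
      exact htS (Finset.mem_union_left _ (Finset.mem_union_left _
        (Finset.mem_image.mpr ⟨t + c, hmem, by ring⟩)))
    have hmem1 : ∀ t : ℝ, t ∉ S → t + b ∉ sγ := by
      intro t htS hmem
      exact htS (Finset.mem_union_left _ (Finset.mem_union_right _
        (Finset.mem_image.mpr ⟨t + b, hmem, by ring⟩)))
    have hmemc : ∀ t : ℝ, t ∉ S → t ≠ -c := by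
      intro t htS h
      exact htS (Finset.mem_union_right _ (by simp [h]))
    refine ⟨?_, S, ?_, ?_, max C₀ Cγ, ?_⟩
    · -- continuity of τ
      intro t ht
      have hIic : ContinuousWithinAt τ (Set.Icc A 0 ∩ Set.Iic (-c)) t := by
        by_cases htc : t ≤ -c
        · have hmaps : Set.MapsTo (fun s : ℝ => s + c) (Set.Icc A 0 ∩ Set.Iic (-c))
              (Set.Icc (A + c) 0) := by
            rintro s ⟨⟨h1, _⟩, h3⟩
            have h3' : s ≤ -c := h3
            refine Set.mem_Icc.mpr ⟨?_, ?_⟩ <;> simp only [] <;> linarith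
          have hf : ContinuousWithinAt (fun s : ℝ => s + c) (Set.Icc A 0 ∩ Set.Iic (-c)) t :=
            (continuous_id.add continuous_const).continuousWithinAt
          have base := ContinuousWithinAt.comp (f := fun s : ℝ => s + c) (x := t)
            (hσc (t + c) ⟨by linarith [ht.1], by linarith⟩) hf hmaps
          exact base.congr (fun s hs => if_pos hs.2) (if_pos htc)
        · refine continuousWithinAt_of_notMem_closure fun hcl => htc ?_
          exact closure_minimal Set.inter_subset_right isClosed_Iic hcl
      have hIci : ContinuousWithinAt τ (Set.Icc A 0 ∩ Set.Ici (-c)) t := by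
        by_cases htc : -c ≤ t
        · have hmaps : Set.MapsTo (fun s : ℝ => s + b) (Set.Icc A 0 ∩ Set.Ici (-c))
              (Set.Icc a b) := by
            rintro s ⟨⟨_, h2⟩, h3⟩
            have h3' : -c ≤ s := h3
            refine Set.mem_Icc.mpr ⟨?_, ?_⟩ <;> simp only [] <;> linarith
          have hf : ContinuousWithinAt (fun s : ℝ => s + b) (Set.Icc A 0 ∩ Set.Ici (-c)) t :=
            (continuous_id.add continuous_const).continuousWithinAt
          have base := ContinuousWithinAt.comp (f := fun s : ℝ => s + b) (x := t)
            (hγcont (t + b) ⟨by linarith, by linarith [ht.2]⟩) hf hmaps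
          exact base.congr (fun s hs => hτIci s hs.2) (hτIci t htc)
        · refine continuousWithinAt_of_notMem_closure fun hcl => htc ?_
          exact closure_minimal Set.inter_subset_right isClosed_Ici hcl
      refine (hIic.union hIci).mono fun s hs => ?_
      rcases le_total s (-c) with h | h
      · exact Or.inl ⟨hs, h⟩
      · exact Or.inr ⟨hs, h⟩
    · -- derivative
      intro t ht hts
      have ht0 := hmem0 t hts
      have ht1 := hmem1 t hts
      have htc := hmemc t hts
      rcases lt_or_gt_of_ne htc with h | h
      · have hd1 : HasDerivAt (fun s => σ (s + c)) (σ' (t + c)) t :=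
          HasDerivAt.comp_add_const t c (hσd (t + c) ⟨by linarith [ht.1], by linarith⟩ ht0)
        have heq : τ =ᶠ[𝓝 t] fun s => σ (s + c) := by
          filter_upwards [Iio_mem_nhds h] with s hs
          exact if_pos (le_of_lt hs)
        have hv : τ' t = σ' (t + c) := if_pos h.le
        rw [hv]
        exact heq.hasDerivAt_iff.mpr hd1
      · have hd1 : HasDerivAt (fun s => γ (s + b)) (γ' (t + b)) t :=
          HasDerivAt.comp_add_const t b (hγd (t + b) ⟨by linarith, by linarith [ht.2]⟩ ht1)
        have heq : τ =ᶠ[𝓝 t] fun s : ℝ => γ (s + b) := by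
          filter_upwards [Ioi_mem_nhds h] with s hs
          exact if_neg (not_le.mpr hs)
        have hv : τ' t = γ' (t + b) := if_neg (not_le.mpr h)
        rw [hv]
        exact heq.hasDerivAt_iff.mpr hd1
    · -- continuity of τ'
      intro t ht
      obtain ⟨htI, htS⟩ := ht
      have htS' : t ∉ S := htS
      have ht0 := hmem0 t htS'
      have ht1 := hmem1 t htS'
      have htc := hmemc t htS'
      rcases lt_or_gt_of_ne htc with h | h
      · have hmaps : Set.MapsTo (fun s : ℝ => s + c)
            ((Set.Icc A 0 \ (S : Set ℝ)) ∩ Set.Iio (-c)) (Set.Icc (A + c) 0 \ (s₀ : Set ℝ)) := by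
          rintro s ⟨⟨hsI, hsS⟩, hsIo⟩
          have hsIo' : s < -c := hsIo
          refine ⟨Set.mem_Icc.mpr ⟨?_, ?_⟩, ?_⟩
          · simp only []; linarith [hsI.1]
          · simp only []; linarith
          · exact hmem0 s hsS
        have hf : ContinuousWithinAt (fun s : ℝ => s + c)
            ((Set.Icc A 0 \ (S : Set ℝ)) ∩ Set.Iio (-c)) t :=
          (continuous_id.add continuous_const).continuousWithinAt
        have base := ContinuousWithinAt.comp (f := fun s : ℝ => s + c) (x := t)
          (hσc' (t + c) ⟨⟨by linarith [htI.1], by linarith⟩, ht0⟩) hf hmaps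
        have h2 : ContinuousWithinAt τ' ((Set.Icc A 0 \ (S : Set ℝ)) ∩ Set.Iio (-c)) t :=
          base.congr (fun s hs => if_pos (le_of_lt hs.2)) (if_pos h.le)
        exact h2.mono_of_mem_nhdsWithin (inter_mem_nhdsWithin _ (Iio_mem_nhds h))
      · have hmaps : Set.MapsTo (fun s : ℝ => s + b)
            ((Set.Icc A 0 \ (S : Set ℝ)) ∩ Set.Ioi (-c)) (Set.Icc a b \ (sγ : Set ℝ)) := by
          rintro s ⟨⟨hsI, hsS⟩, hsIo⟩
          have hsIo' : -c < s := hsIo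
          refine ⟨Set.mem_Icc.mpr ⟨?_, ?_⟩, ?_⟩
          · simp only []; linarith
          · simp only []; linarith [hsI.2]
          · exact hmem1 s hsS
        have hf : ContinuousWithinAt (fun s : ℝ => s + b)
            ((Set.Icc A 0 \ (S : Set ℝ)) ∩ Set.Ioi (-c)) t :=
          (continuous_id.add continuous_const).continuousWithinAt
        have base := ContinuousWithinAt.comp (f := fun s : ℝ => s + b) (x := t)
          (hγc' (t + b) ⟨⟨by linarith, by linarith [htI.2]⟩, ht1⟩) hf hmaps
        have h2 : ContinuousWithinAt τ' ((Set.Icc A 0 \ (S : Set ℝ)) ∩ Set.Ioi (-c)) t :=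
          base.congr (fun s hs => if_neg (not_le.mpr hs.2)) (if_neg (not_le.mpr h))
        exact h2.mono_of_mem_nhdsWithin (inter_mem_nhdsWithin _ (Ioi_mem_nhds h))
    · -- bound
      intro t ht
      by_cases htc : t ≤ -c
      · have hv : τ' t = σ' (t + c) := if_pos htc
        rw [hv]
        exact le_trans (hC₀ (t + c) ⟨by linarith [ht.1], by linarith⟩) (le_max_left _ _)
      · have hv : τ' t = γ' (t + b) := if_neg htc
        rw [hv]
        push_neg at htc
        exact le_trans (hCγ (t + b) ⟨by linarith, by linarith [ht.2]⟩) (le_max_right _ _)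
  · -- endpoint
    have := hτIci 0 (by linarith)
    rwa [zero_add] at this
  · -- value
    conv_rhs => rw [← Set.Iic_union_Ioc_eq_Iic (neg_nonpos.mpr hc0.le)]
    rw [setIntegral_union (Set.Iic_disjoint_Ioc le_rfl) measurableSet_Ioc hIicInt hIocInt,
      hIicVal, hIocVal]


theorem const_mem {n : ℕ} {L : E n × E n → ℝ} {lam : ℝ} (hlam : 0 < lam) (x : E n) :
    (∫ s in Set.Iic (0:ℝ), Real.exp (lam * s) * L (x, 0)) ∈ valSet lam L x := by
  refine ⟨fun _ => x, fun _ => 0, ?_, rfl, ?_, rfl⟩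
  · intro a _
    exact ⟨continuousOn_const, ∅, fun t _ _ => hasDerivAt_const t x, continuousOn_const, 0,
      fun t _ => by simp⟩
  · exact (exp_intOn hlam).mul_const _

theorem valSet_lb {n : ℕ} {L : E n × E n → ℝ} {c0 : ℝ}
    (hlb : ∀ x v : E n, -c0 ≤ L (x, v)) {lam : ℝ} (hlam : 0 < lam) {x : E n}
    {r : ℝ} (hr : r ∈ valSet lam L x) : -c0 / lam ≤ r := by
  obtain ⟨σ, σ', _, _, hint, rfl⟩ := hr
  have h1 : (∫ s in Set.Iic (0:ℝ), Real.exp (lam * s) * (-c0))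
      ≤ ∫ s in Set.Iic (0:ℝ), Real.exp (lam * s) * L (σ s, σ' s) := by
    apply setIntegral_mono_on ((exp_intOn hlam).mul_const _) hint measurableSet_Iic
    intro s _
    exact mul_le_mul_of_nonneg_left (hlb _ _) (Real.exp_pos _).le
  calc -c0 / lam = (∫ s in Set.Iic (0:ℝ), Real.exp (lam * s)) * (-c0) := by
        rw [exp_integral_Iic hlam]; ring
    _ = ∫ s in Set.Iic (0:ℝ), Real.exp (lam * s) * (-c0) := (integral_mul_const _ _).symm
    _ ≤ _ := h1

theorem L_per {n : ℕ} {H L : E n × E n → ℝ} (hLH : IsLagrangianOf L H)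
    (hper : ∀ (k : Fin n → ℤ) (x pp : E n), H (x + intVec k, pp) = H (x, pp))
    (k : Fin n → ℤ) (x v : E n) : L (x + intVec k, v) = L (x, v) := by
  have h1 := hLH (x + intVec k) v
  have h2 : {r : ℝ | ∃ p : E n, r = (inner ℝ p v : ℝ) - H (x + intVec k, p)}
      = {r : ℝ | ∃ p : E n, r = (inner ℝ p v : ℝ) - H (x, p)} := by
    simp only [hper]
  rw [h2] at h1
  exact h1.unique (hLH x v)

theorem valSet_sub {n : ℕ} {L : E n × E n → ℝ}
    (hLper : ∀ (k : Fin n → ℤ) (x v : E n), L (x + intVec k, v) = L (x, v))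
    (lam : ℝ) (k : Fin n → ℤ) (x : E n) :
    valSet lam L x ⊆ valSet lam L (x + intVec k) := by
  rintro r ⟨σ, σ', hpc, h0, hint, rfl⟩
  refine ⟨fun s => σ s + intVec k, σ', ?_, by show σ 0 + intVec k = x + intVec k; rw [h0], ?_, ?_⟩
  · intro a ha
    obtain ⟨hc, s, hd, hc', C, hC⟩ := hpc a ha
    exact ⟨hc.add continuousOn_const, s, fun t ht hts => (hd t ht hts).add_const _, hc', C, hC⟩
  · simpa only [hLper] using hint
  · simp only [hLper]


/-- Properties of the value function `ū_λ`: it is well defined (finite),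
ℤⁿ-periodic, Lipschitz with a constant independent of `λ`, and λ-dominated. -/
theorem stmt_10 {n : ℕ} (hn : 1 ≤ n)
    (H L : E n × E n → ℝ) (hH : Tonelli H) (hLH : IsLagrangianOf L H)
    (hper : ∀ (k : Fin n → ℤ) (x pp : E n), H (x + intVec k, pp) = H (x, pp)) :
    -- (1) finiteness and periodicity
    ((∀ lam : ℝ, 0 < lam → ∀ x : E n,
        (valSet lam L x).Nonempty ∧ BddBelow (valSet lam L x)) ∧
      (∀ lam : ℝ, 0 < lam → ∀ (k : Fin n → ℤ) (x : E n),
        ubar lam L (x + intVec k) = ubar lam L x)) ∧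
    -- (2) Lipschitz, uniformly in λ
    (∃ K : ℝ, 0 < K ∧ ∀ lam : ℝ, 0 < lam → ∀ x y : E n,
        |ubar lam L x - ubar lam L y| ≤ K * ‖x - y‖) ∧
    -- (3) domination
    (∀ lam : ℝ, 0 < lam → Dominated lam L (ubar lam L)) := by
  have hHc : Continuous H := hH.1.continuous
  have hLm : Measurable L := L_meas hHc hLH
  obtain ⟨c0, hc00, hlb⟩ := L_lb hHc hLH hper
  have hub : ∀ A : ℝ, 0 ≤ A → ∃ B : ℝ, 0 ≤ B ∧ ∀ x v : E n, ‖v‖ ≤ A → L (x, v) ≤ B :=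
    fun A hA => L_ub hH hLH A hA
  have hLper : ∀ (k : Fin n → ℤ) (x v : E n), L (x + intVec k, v) = L (x, v) :=
    L_per hLH hper
  have hne : ∀ lam : ℝ, 0 < lam → ∀ x : E n, (valSet lam L x).Nonempty :=
    fun lam hlam x => ⟨_, const_mem hlam x⟩
  have hbdd : ∀ lam : ℝ, 0 < lam → ∀ x : E n, BddBelow (valSet lam L x) :=
    fun lam hlam x => ⟨-c0 / lam, fun r hr => valSet_lb hlb hlam hr⟩
  have hubarlb : ∀ lam : ℝ, 0 < lam → ∀ x : E n, -c0 / lam ≤ ubar lam L x :=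
    fun lam hlam x => le_csInf (hne lam hlam x) fun r hr => valSet_lb hlb hlam hr
  have hperiodic : ∀ lam : ℝ, 0 < lam → ∀ (k : Fin n → ℤ) (x : E n),
      ubar lam L (x + intVec k) = ubar lam L x := by
    intro lam hlam k x
    have hset : valSet lam L (x + intVec k) = valSet lam L x := by
      apply Set.Subset.antisymm
      · intro r hr
        have h1 := valSet_sub hLper lam (fun i => -k i) (x + intVec k) hr
        have hik : intVec (fun i => -k i) = -intVec k := by
          rw [intVec, intVec, ← map_neg]
          congr 1
          funext i
          simp [Pi.neg_apply]
        rw [hik, add_neg_cancel_right] at h1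
        exact h1
      · exact valSet_sub hLper lam k x
    rw [ubar, ubar, hset]
  have hkey : ∀ lam : ℝ, 0 < lam → ∀ a b : ℝ, a < b → ∀ γ γ' : ℝ → E n,
      PiecewiseC1 a b γ γ' →
      Real.exp (lam * b) * ubar lam L (γ b) - Real.exp (lam * a) * ubar lam L (γ a)
        ≤ ∫ t in a..b, Real.exp (lam * t) * L (γ t, γ' t) := by
    intro lam hlam a b hab γ γ' hγ
    set I := ∫ t in a..b, Real.exp (lam * t) * L (γ t, γ' t) with hI
    have h1 : ∀ r ∈ valSet lam L (γ a),
        ubar lam L (γ b) ≤ Real.exp (lam * (a - b)) * r + Real.exp (-(lam * b)) * I :=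
      fun r hr => csInf_le (hbdd lam hlam _) (key_mem hLm hlb hub hlam hab hγ hr)
    have h2 : (Real.exp (lam * b) * ubar lam L (γ b) - I) / Real.exp (lam * a)
        ≤ ubar lam L (γ a) := by
      apply le_csInf (hne lam hlam _)
      intro r hr
      have h3 := h1 r hr
      rw [div_le_iff₀ (Real.exp_pos _)]
      have h4 := mul_le_mul_of_nonneg_left h3 (Real.exp_pos (lam * b)).le
      have e1 : Real.exp (lam * (a - b)) * Real.exp (lam * b) = Real.exp (lam * a) := by
        rw [← Real.exp_add]; congr 1; ring
      have e2 : Real.exp (-(lam * b)) * Real.exp (lam * b) = 1 := by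
        rw [← Real.exp_add]; simp
      have h5 : Real.exp (lam * b) * (Real.exp (lam * (a - b)) * r + Real.exp (-(lam * b)) * I)
          = Real.exp (lam * a) * r + I := by
        rw [mul_add, show Real.exp (lam * b) * (Real.exp (lam * (a - b)) * r)
            = Real.exp (lam * (a - b)) * Real.exp (lam * b) * r by ring, e1,
          show Real.exp (lam * b) * (Real.exp (-(lam * b)) * I)
            = Real.exp (-(lam * b)) * Real.exp (lam * b) * I by ring, e2, one_mul]
      rw [h5] at h4
      linarith [mul_comm r (Real.exp (lam * a)), h4]
    rw [div_le_iff₀ (Real.exp_pos _)] at h2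
    have := mul_comm (ubar lam L (γ a)) (Real.exp (lam * a))
    linarith [h2]
  obtain ⟨B1, hB10, hB1⟩ := hub 1 zero_le_one
  have hmain : ∀ lam : ℝ, 0 < lam → ∀ x y : E n,
      ubar lam L x - ubar lam L y ≤ (c0 + B1) * ‖x - y‖ := by
    intro lam hlam x y
    rcases eq_or_ne x y with rfl | hxy
    · simp only [sub_self, norm_zero, mul_zero, le_refl]
    set T : ℝ := ‖x - y‖ with hT
    have hT0 : 0 < T := by rw [hT]; exact norm_pos_iff.mpr (sub_ne_zero.mpr hxy)
    set γ : ℝ → E n := fun t => y + ((t + T) / T) • (x - y) with hγdef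
    set γ' : ℝ → E n := fun _ => T⁻¹ • (x - y) with hγ'def
    have hγa : γ (-T) = y := by
      show y + ((-T + T) / T) • (x - y) = y
      rw [neg_add_cancel, zero_div, zero_smul, add_zero]
    have hγb : γ 0 = x := by
      show y + ((0 + T) / T) • (x - y) = x
      rw [zero_add, div_self hT0.ne', one_smul]
      abel
    have hγ'n : ∀ t : ℝ, ‖γ' t‖ = 1 := by
      intro t
      show ‖T⁻¹ • (x - y)‖ = 1
      rw [norm_smul, norm_inv, Real.norm_eq_abs, abs_of_pos hT0, ← hT, inv_mul_cancel₀ hT0.ne']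
    have hpc : PiecewiseC1 (-T) 0 γ γ' := by
      refine ⟨?_, ∅, ?_, continuousOn_const, 1, fun t _ => le_of_eq (hγ'n t)⟩
      · exact (continuous_const.add (((continuous_id.add continuous_const).div_const T).smul
          continuous_const)).continuousOn
      · intro t _ _
        have h1 : HasDerivAt (fun t : ℝ => (t + T) / T) (1 / T) t :=
          ((hasDerivAt_id t).add_const T).div_const T
        have h2 := (h1.smul_const (x - y)).const_add y
        have h3 : γ' t = (1 / T) • (x - y) := by rw [one_div]
        rw [h3]
        exact h2
    have hIoc : IntegrableOn (fun t => Real.exp (lam * t) * L (γ t, γ' t))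
        (Set.Ioc (-T) (0:ℝ)) := by
      refine integrand_intOn hLm hpc hlam (M := max c0 B1) ?_
      intro t _
      rw [abs_le]
      constructor
      · linarith [hlb (γ t) (γ' t), le_max_left c0 B1]
      · exact le_trans (hB1 _ _ (le_of_eq (hγ'n t))) (le_max_right _ _)
    set I := ∫ t in (-T)..(0:ℝ), Real.exp (lam * t) * L (γ t, γ' t) with hIdef
    have hIle : I ≤ B1 * T := by
      have hint1 : IntervalIntegrable (fun t => Real.exp (lam * t) * L (γ t, γ' t))
          volume (-T) 0 :=
        (intervalIntegrable_iff_integrableOn_Ioc_of_le (by linarith)).mpr hIoc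
      have hle : ∀ t ∈ Set.Icc (-T) (0:ℝ),
          Real.exp (lam * t) * L (γ t, γ' t) ≤ B1 := by
        intro t ht
        have hLt : L (γ t, γ' t) ≤ B1 := hB1 _ _ (le_of_eq (hγ'n t))
        have hexp : Real.exp (lam * t) ≤ 1 := by
          have := Real.exp_le_exp.mpr (show lam * t ≤ 0 by nlinarith [ht.2])
          rwa [Real.exp_zero] at this
        calc Real.exp (lam * t) * L (γ t, γ' t) ≤ Real.exp (lam * t) * B1 :=
              mul_le_mul_of_nonneg_left hLt (Real.exp_pos _).le
          _ ≤ B1 := mul_le_of_le_one_left hB10 hexp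
      calc I ≤ ∫ _ in (-T)..(0:ℝ), B1 :=
            intervalIntegral.integral_mono_on (by linarith) hint1 intervalIntegrable_const hle
        _ = B1 * T := by
            rw [intervalIntegral.integral_const, smul_eq_mul, sub_neg_eq_add, zero_add, mul_comm]
    have h1 : ∀ r ∈ valSet lam L y, ubar lam L x ≤ Real.exp (-(lam * T)) * r + I := by
      intro r hr
      have hr' : r ∈ valSet lam L (γ (-T)) := by rwa [hγa]
      have hmem := key_mem hLm hlb hub hlam (show (-T) < 0 by linarith) hpc hr'
      rw [hγb] at hmem
      have h2 := csInf_le (hbdd lam hlam x) hmem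
      rw [show lam * (-T - 0) = -(lam * T) by ring, mul_zero, neg_zero, Real.exp_zero,
        one_mul] at h2
      exact h2
    have h3 : (ubar lam L x - I) / Real.exp (-(lam * T)) ≤ ubar lam L y := by
      apply le_csInf (hne lam hlam y)
      intro r hr
      rw [div_le_iff₀ (Real.exp_pos _)]
      linarith [h1 r hr, mul_comm r (Real.exp (-(lam * T)))]
    rw [div_le_iff₀ (Real.exp_pos _)] at h3
    set e : ℝ := Real.exp (-(lam * T)) with hedef
    have hexp1 : 1 - lam * T ≤ e := by
      rw [hedef]
      linarith [Real.add_one_le_exp (-(lam * T))]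
    have hlbY : -c0 / lam ≤ ubar lam L y := hubarlb lam hlam y
    have h4 : ubar lam L y * (e - 1) ≤ (-c0 / lam) * (e - 1) := by
      apply mul_le_mul_of_nonpos_right hlbY
      have : e ≤ 1 := by
        rw [hedef]
        have := Real.exp_le_exp.mpr (show -(lam * T) ≤ 0 by nlinarith)
        rwa [Real.exp_zero] at this
      linarith
    have h5 : (-c0 / lam) * (e - 1) = (c0 / lam) * (1 - e) := by ring
    have h6 : (c0 / lam) * (1 - e) ≤ (c0 / lam) * (lam * T) := by
      apply mul_le_mul_of_nonneg_left (by linarith) (by positivity)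
    have h7 : (c0 / lam) * (lam * T) = c0 * T := by
      field_simp
    have hsplit : ubar lam L y * e = ubar lam L y * (e - 1) + ubar lam L y := by ring
    have hgoal : ubar lam L x - ubar lam L y ≤ (c0 + B1) * T := by nlinarith [h3]
    rw [hT] at hgoal
    exact hgoal
  refine ⟨⟨fun lam hlam x => ⟨hne lam hlam x, hbdd lam hlam x⟩, hperiodic⟩,
    ⟨c0 + B1 + 1, by linarith, ?_⟩, fun lam hlam a b hab γ γ' hγ => hkey lam hlam a b hab γ γ' hγ⟩
  intro lam hlam x y
  have h1 := hmain lam hlam x y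
  have h2 := hmain lam hlam y x
  rw [norm_sub_rev] at h2
  rw [abs_sub_le_iff]
  constructor <;> nlinarith [norm_nonneg (x - y)]


end
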